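/- Let H₁ and H₂ be finite-dimensional complex Hilbert spaces and endow H₁ ⊗ H₂ with the induced inner product. Let (e₁, …, eₙ) and (f₁, …, fₙ) be orthonormal families in H₁ and H₂ respectively, let λ₁, …, λₙ be nonnegative reals with Σᵢ λᵢ = 1, and let ψ = Σᵢ √λᵢ eᵢ ⊗ fᵢ. Let 1 ≤ k ≤ n and let φ be any unit vector in H₁ ⊗ H₂ expressible as a sum of at most k simple tensors, i.e., φ = Σⱼ₌₁ᵏ uⱼ ⊗ vⱼ for some vectors uⱼ ∈ H₁, vⱼ ∈ H₂. Then |⟨ψ, φ⟩|² ≤ λ₁↓ + ⋯ + λ_k↓, where λ₁↓ ≥ ⋯ ≥ λₙ↓ are the λᵢ arranged in decreasing order. -/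

import Mathlib

open scoped InnerProductSpace

lemma aux_majorize {n k : ℕ} (hk1 : 1 ≤ k) (hkn : k ≤ n)
    (lam : Fin n → ℝ) (hlam0 : ∀ i, 0 ≤ lam i)
    (σ : Equiv.Perm (Fin n)) (hσ : Antitone (lam ∘ σ))
    (t : Fin n → ℝ) (ht0 : ∀ i, 0 ≤ t i) (ht1 : ∀ i, t i ≤ 1)
    (htsum : ∑ i, t i ≤ (k : ℝ)) :
    ∑ i, lam i * t i ≤
      ∑ i ∈ Finset.univ.filter (fun i : Fin n => (i : ℕ) < k), lam (σ i) := by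
  classical
  set K := Finset.univ.filter (fun i : Fin n => (i : ℕ) < k) with hK
  have hKcard : K.card = k := by
    have : K = Finset.map (Fin.castLEEmb hkn) Finset.univ := by
      ext a
      simp only [hK, Finset.mem_filter, Finset.mem_univ, true_and, Finset.mem_map,
        Fin.castLEEmb_apply]
      constructor
      · intro h; exact ⟨⟨a, h⟩, by ext; simp⟩
      · rintro ⟨b, rfl⟩; simp [b.isLt]
    simp [this]
  have hm : k - 1 < n := lt_of_lt_of_le (Nat.pred_lt (Nat.one_le_iff_ne_zero.mp hk1)) hkn
  set m : Fin n := ⟨k - 1, hm⟩ with hmdef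
  set c : ℝ := lam (σ m) with hc
  have hc0 : 0 ≤ c := hlam0 _
  have h1 : ∑ i, lam i * t i = ∑ i, lam (σ i) * t (σ i) := (Equiv.sum_comp σ fun i => lam i * t i).symm
  have h2 : ∑ i, lam (σ i) * t (σ i)
      = ∑ i, (lam (σ i) - c) * t (σ i) + c * ∑ i, t (σ i) := by
    rw [Finset.mul_sum, ← Finset.sum_add_distrib]
    congr 1; funext i; ring
  have h3 : ∑ i, t (σ i) = ∑ i, t i := Equiv.sum_comp σ t
  have h4 : ∑ i, (lam (σ i) - c) * t (σ i) ≤ ∑ i ∈ K, (lam (σ i) - c) := by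
    rw [← Finset.sum_filter_add_sum_filter_not Finset.univ (fun i : Fin n => (i : ℕ) < k)
      (fun i => (lam (σ i) - c) * t (σ i))]
    have hA : ∑ i ∈ K, (lam (σ i) - c) * t (σ i) ≤ ∑ i ∈ K, (lam (σ i) - c) := by
      refine Finset.sum_le_sum fun i hi => ?_
      have hik : (i : ℕ) < k := (Finset.mem_filter.mp hi).2
      have him : i ≤ m := by
        rw [hmdef]; exact Fin.le_def.mpr (by simp; omega)
      have hci : c ≤ lam (σ i) := hσ him
      calc (lam (σ i) - c) * t (σ i) ≤ (lam (σ i) - c) * 1 :=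
            mul_le_mul_of_nonneg_left (ht1 _) (by linarith)
        _ = lam (σ i) - c := mul_one _
    have hB : ∑ i ∈ Finset.univ.filter (fun i : Fin n => ¬ (i : ℕ) < k),
        (lam (σ i) - c) * t (σ i) ≤ 0 := by
      refine Finset.sum_nonpos fun i hi => ?_
      have hik : ¬ (i : ℕ) < k := (Finset.mem_filter.mp hi).2
      have hmi : m ≤ i := by
        rw [hmdef]; exact Fin.le_def.mpr (by simp; omega)
      have : lam (σ i) ≤ c := hσ hmi
      exact mul_nonpos_of_nonpos_of_nonneg (by linarith) (ht0 _)
    linarith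
  have h5 : ∑ i ∈ K, (lam (σ i) - c) = ∑ i ∈ K, lam (σ i) - k * c := by
    rw [Finset.sum_sub_distrib, Finset.sum_const, hKcard, nsmul_eq_mul]
  have h6 : c * ∑ i, t i ≤ c * k := mul_le_mul_of_nonneg_left htsum hc0
  calc ∑ i, lam i * t i = ∑ i, (lam (σ i) - c) * t (σ i) + c * ∑ i, t i := by
        rw [h1, h2, h3]
    _ ≤ (∑ i ∈ K, lam (σ i) - k * c) + c * k := by rw [← h5]; linarith
    _ = ∑ i ∈ K, lam (σ i) := by ring

/-- Let `H = H₁ ⊗ H₂` carry the induced inner product, realized via a bilinear map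
`μ : H₁ → H₂ → H`, `μ a b = a ⊗ b`, satisfying `⟨a⊗b, c⊗d⟩ = ⟨a,c⟩⟨b,d⟩`.  If
`ψ = ∑ᵢ √λᵢ eᵢ ⊗ fᵢ` with `(eᵢ)`, `(fᵢ)` orthonormal and `λᵢ ≥ 0`, `∑ᵢ λᵢ = 1`, and `φ`
is a unit vector which is a sum of at most `k` simple tensors, then
`|⟨ψ,φ⟩|² ≤ λ₁↓ + ⋯ + λ_k↓`. -/
theorem sq_abs_inner_le_sum_largest_schmidt
    {H₁ H₂ H : Type*} [NormedAddCommGroup H₁] [InnerProductSpace ℂ H₁]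
    [NormedAddCommGroup H₂] [InnerProductSpace ℂ H₂]
    [NormedAddCommGroup H] [InnerProductSpace ℂ H]
    [FiniteDimensional ℂ H₁] [FiniteDimensional ℂ H₂]
    (μ : H₁ →ₗ[ℂ] H₂ →ₗ[ℂ] H)
    (hμ : ∀ (a c : H₁) (b d : H₂), ⟪μ a b, μ c d⟫_ℂ = ⟪a, c⟫_ℂ * ⟪b, d⟫_ℂ)
    {n : ℕ} (e : Fin n → H₁) (f : Fin n → H₂)
    (he : Orthonormal ℂ e) (hf : Orthonormal ℂ f)
    (lam : Fin n → ℝ) (hlam : ∀ i, 0 ≤ lam i) (hsum : ∑ i, lam i = 1)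
    (σ : Equiv.Perm (Fin n)) (hσ : Antitone (lam ∘ σ))
    (ψ : H) (hψ : ψ = ∑ i, (Real.sqrt (lam i) : ℂ) • μ (e i) (f i))
    {k : ℕ} (hk1 : 1 ≤ k) (hkn : k ≤ n)
    (u : Fin k → H₁) (v : Fin k → H₂)
    (φ : H) (hφ : φ = ∑ j, μ (u j) (v j)) (hφ1 : ‖φ‖ = 1) :
    ‖⟪ψ, φ⟫_ℂ‖ ^ 2 ≤ ∑ i ∈ Finset.univ.filter (fun i : Fin n => (i : ℕ) < k),
      lam (σ i) := by
  classical
  set U : Submodule ℂ H₁ := Submodule.span ℂ (Set.range u) with hU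
  have hUu : ∀ j, u j ∈ U := fun j => Submodule.subset_span (Set.mem_range_self j)
  set P : H₁ → H₁ := fun x => (U.orthogonalProjectionOnto x : H₁) with hP
  set t : Fin n → ℝ := fun i => ‖P (e i)‖ ^ 2 with ht
  set s : Fin n → ℂ := fun i => ((Real.sqrt (lam i) : ℝ) : ℂ) with hs
  set ψ' : H := ∑ i, s i • μ (P (e i)) (f i) with hψ'
  -- projection preserves inner products against members of U
  have hproj : ∀ (x y : H₁), y ∈ U → ⟪P x, y⟫_ℂ = ⟪x, y⟫_ℂ := by
    intro x y hy
    have h0 : ⟪x - P x, y⟫_ℂ = 0 := U.starProjection_inner_eq_zero x y hy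
    rw [inner_sub_left, sub_eq_zero] at h0
    exact h0.symm
  -- inner product expansion
  have hinner : ∀ (w : Fin n → H₁),
      ⟪∑ i, s i • μ (w i) (f i), φ⟫_ℂ
        = ∑ i, ∑ j, (starRingEnd ℂ) (s i) * (⟪w i, u j⟫_ℂ * ⟪f i, v j⟫_ℂ) := by
    intro w
    rw [hφ, sum_inner]
    refine Finset.sum_congr rfl fun i _ => ?_
    rw [inner_smul_left, inner_sum, Finset.mul_sum]
    exact Finset.sum_congr rfl fun j _ => by rw [hμ]
  have key : ⟪ψ, φ⟫_ℂ = ⟪ψ', φ⟫_ℂ := by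
    rw [hψ, hψ', hinner, hinner]
    exact Finset.sum_congr rfl fun i _ => Finset.sum_congr rfl fun j _ => by
      rw [hproj (e i) (u j) (hUu j)]
  -- norm of ψ'
  have hfite : ∀ i j, ⟪f i, f j⟫_ℂ = if i = j then (1:ℂ) else 0 :=
    orthonormal_iff_ite.mp hf
  have hs_real : ∀ i, (starRingEnd ℂ) (s i) = s i := fun i => Complex.conj_ofReal _
  have hpsi' : ⟪ψ', ψ'⟫_ℂ = ∑ i, ((lam i : ℂ) * ((t i : ℝ) : ℂ)) := by
    rw [hψ', sum_inner]
    refine Finset.sum_congr rfl fun i _ => ?_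
    rw [inner_smul_left, inner_sum]
    have : ∀ j, ⟪μ (P (e i)) (f i), s j • μ (P (e j)) (f j)⟫_ℂ
        = if i = j then ((s i) * ⟪P (e i), P (e i)⟫_ℂ) else 0 := by
      intro j
      rw [inner_smul_right, hμ, hfite]
      by_cases h : i = j
      · subst h; simp
      · simp [h]
    rw [Finset.sum_congr rfl fun j _ => this j, Finset.sum_ite_eq Finset.univ i
      (fun _ => s i * ⟪P (e i), P (e i)⟫_ℂ)]
    simp only [Finset.mem_univ, if_true]
    have hsq : s i * s i = (lam i : ℂ) := by
      rw [hs]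
      push_cast
      rw [← Complex.ofReal_mul, Real.mul_self_sqrt (hlam i)]
    rw [hs_real, inner_self_eq_norm_sq_to_K, ← mul_assoc, hsq]
    simp only [ht]
    push_cast
    ring_nf
    rfl
  have hnorm : ‖ψ'‖ ^ 2 = ∑ i, lam i * t i := by
    have h2 : (∑ i, ((lam i : ℂ) * ((t i : ℝ) : ℂ))) = ((∑ i, lam i * t i : ℝ) : ℂ) := by
      push_cast; rfl
    rw [← inner_self_eq_norm_sq (𝕜 := ℂ), hpsi', h2]
    simp
  -- Cauchy–Schwarz
  have hcs : ‖⟪ψ, φ⟫_ℂ‖ ^ 2 ≤ ∑ i, lam i * t i := by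
    rw [key, ← hnorm]
    have := norm_inner_le_norm (𝕜 := ℂ) ψ' φ
    rw [hφ1, mul_one] at this
    exact pow_le_pow_left₀ (norm_nonneg _) this 2
  -- bounds on t
  have ht0 : ∀ i, 0 ≤ t i := fun i => sq_nonneg _
  have ht1 : ∀ i, t i ≤ 1 := by
    intro i
    have h1 : ‖P (e i)‖ ≤ ‖e i‖ := by
      rw [hP]
      calc ‖(U.orthogonalProjectionOnto (e i) : H₁)‖ = ‖U.orthogonalProjectionOnto (e i)‖ := rfl
        _ ≤ ‖U.orthogonalProjectionOnto‖ * ‖e i‖ := (U.orthogonalProjectionOnto).le_opNorm _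
        _ ≤ 1 * ‖e i‖ := by
            exact mul_le_mul_of_nonneg_right (Submodule.orthogonalProjectionOnto_norm_le U) (norm_nonneg _)
        _ = ‖e i‖ := one_mul _
    rw [ht]
    calc ‖P (e i)‖ ^ 2 ≤ ‖e i‖ ^ 2 := pow_le_pow_left₀ (norm_nonneg _) h1 2
      _ = 1 := by rw [he.1 i]; norm_num
  -- sum bound via Bessel
  have htsum : ∑ i, t i ≤ (k : ℝ) := by
    set d := Module.finrank ℂ U with hd
    set b : OrthonormalBasis (Fin d) ℂ U := stdOrthonormalBasis ℂ U with hb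
    have hdk : d ≤ k := by
      have h1 : Module.finrank ℂ U ≤ (Set.range u).toFinset.card :=
        finrank_span_le_card (Set.range u)
      have h2 : (Set.range u).toFinset.card ≤ Fintype.card (Fin k) := by
        rw [Set.toFinset_card]; exact Fintype.card_range_le u
      simpa using h1.trans h2
    have hti : ∀ i, t i = ∑ m, ‖⟪e i, (b m : H₁)⟫_ℂ‖ ^ 2 := by
      intro i
      have h1 : t i = ‖U.orthogonalProjectionOnto (e i)‖ ^ 2 := rfl
      have h2 : ‖U.orthogonalProjectionOnto (e i)‖ ^ 2
          = ∑ m, ‖b.repr (U.orthogonalProjectionOnto (e i)) m‖ ^ 2 := by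
        rw [← b.repr.norm_map (U.orthogonalProjectionOnto (e i)), EuclideanSpace.norm_eq,
          Real.sq_sqrt (Finset.sum_nonneg fun _ _ => sq_nonneg _)]
      rw [h1, h2]
      refine Finset.sum_congr rfl fun m _ => ?_
      rw [b.repr_apply_apply, Submodule.inner_orthogonalProjectionOnto_eq_of_mem_left]
      rw [← norm_inner_symm]
    calc ∑ i, t i = ∑ i, ∑ m, ‖⟪e i, (b m : H₁)⟫_ℂ‖ ^ 2 :=
          Finset.sum_congr rfl fun i _ => hti i
      _ = ∑ m, ∑ i, ‖⟪e i, (b m : H₁)⟫_ℂ‖ ^ 2 := Finset.sum_comm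
      _ ≤ ∑ _m : Fin d, (1 : ℝ) := by
          refine Finset.sum_le_sum fun m _ => ?_
          have := he.sum_inner_products_le (x := ((b m : H₁))) (s := Finset.univ)
          have hbm : ‖(b m : H₁)‖ = 1 := by
            have := b.orthonormal.1 m
            exact this
          calc ∑ i, ‖⟪e i, (b m : H₁)⟫_ℂ‖ ^ 2 ≤ ‖(b m : H₁)‖ ^ 2 := this
            _ = 1 := by rw [hbm]; norm_num
      _ = (d : ℝ) := by simp
      _ ≤ (k : ℝ) := by exact_mod_cast hdk
  exact hcs.trans (aux_majorize hk1 hkn lam hlam σ hσ t ht0 ht1 htsum)
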